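/- Comparison of spectral gaps (Lemma 4.3, Diaconis–Saloff-Coste): let Σ be a nonempty finite set, μ and μ' positive probability densities on Σ, and K, K' nonnegative kernels on Σ with stationary densities μ and μ' respectively. Define Dirichlet forms E(f,f) = (1/2)∑_{σ,σ'} |f(σ)−f(σ')|² K(σ,σ') μ(σ) and E'(f,f) = (1/2)∑_{σ,σ'} |f(σ)−f(σ')|² K'(σ,σ') μ'(σ), variances Var(f) = (1/2)∑_{σ,σ'} |f(σ)−f(σ')|² μ(σ)μ(σ') and Var'(f) analogously with μ', and spectral gaps λ = inf{E(f,f)/Var(f) : Var(f) ≠ 0}, λ' = inf{E'(f,f)/Var'(f) : Var'(f) ≠ 0}. If there exist constants A > 0 and a > 0 such that E'(f,f) ≤ A·E(f,f) for every f : Σ → ℝ and a·μ(σ) ≤ μ'(σ) for every σ ∈ Σ, then λ' ≤ (A/a)·λ. -/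

import Mathlib

open Finset

lemma double_sum_var {S : Type*} [Fintype S] (ν : S → ℝ) (hsum : ∑ σ, ν σ = 1)
    (f : S → ℝ) :
    (1 / 2) * ∑ σ, ∑ σ', |f σ - f σ'| ^ 2 * ν σ * ν σ'
      = ∑ σ, (f σ - ∑ τ, f τ * ν τ) ^ 2 * ν σ := by
  set m := ∑ τ, f τ * ν τ with hm
  have inner : ∀ σ, ∑ σ', |f σ - f σ'| ^ 2 * ν σ * ν σ'
      = (f σ) ^ 2 * ν σ - 2 * (f σ * ν σ) * m + ν σ * ∑ τ, (f τ) ^ 2 * ν τ := by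
    intro σ
    have h : ∀ σ', |f σ - f σ'| ^ 2 * ν σ * ν σ'
        = (f σ) ^ 2 * ν σ * ν σ' - 2 * (f σ * ν σ) * (f σ' * ν σ')
          + ν σ * ((f σ') ^ 2 * ν σ') := by
      intro σ'; rw [sq_abs]; ring
    simp only [h]
    rw [Finset.sum_add_distrib, Finset.sum_sub_distrib, ← Finset.mul_sum,
      ← Finset.mul_sum, ← Finset.mul_sum, hsum, hm]
    ring
  simp only [inner]
  rw [Finset.sum_add_distrib, Finset.sum_sub_distrib, ← Finset.sum_mul,
    ← Finset.mul_sum, ← Finset.sum_mul, hsum]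
  have expand : ∀ σ, (f σ - m) ^ 2 * ν σ
      = (f σ) ^ 2 * ν σ - 2 * m * (f σ * ν σ) + m ^ 2 * ν σ := by intro σ; ring
  have rhs : ∑ σ, (f σ - m) ^ 2 * ν σ
      = (∑ σ, (f σ) ^ 2 * ν σ) - 2 * m * m + m ^ 2 := by
    simp only [expand]
    rw [Finset.sum_add_distrib, Finset.sum_sub_distrib, ← Finset.mul_sum,
      ← Finset.mul_sum, hsum, ← hm]
    ring
  rw [rhs]
  ring

lemma var_min {S : Type*} [Fintype S] (ν : S → ℝ)
    (hsum : ∑ σ, ν σ = 1) (f : S → ℝ) (c : ℝ) :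
    ∑ σ, (f σ - ∑ τ, f τ * ν τ) ^ 2 * ν σ ≤ ∑ σ, (f σ - c) ^ 2 * ν σ := by
  set m := ∑ τ, f τ * ν τ with hm
  have key : ∑ σ, (f σ - c) ^ 2 * ν σ
      = (∑ σ, (f σ - m) ^ 2 * ν σ) + (m - c) ^ 2 := by
    have h : ∀ σ, (f σ - c) ^ 2 * ν σ
        = (f σ - m) ^ 2 * ν σ + 2 * (m - c) * (f σ * ν σ - m * ν σ)
          + (m - c) ^ 2 * ν σ := by intro σ; ring
    simp only [h]
    rw [Finset.sum_add_distrib, Finset.sum_add_distrib, ← Finset.mul_sum,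
      ← Finset.mul_sum, Finset.sum_sub_distrib, ← Finset.mul_sum, hsum, ← hm]
    ring
  rw [key]
  nlinarith [sq_nonneg (m - c)]

/-- Comparison of spectral gaps (Lemma 4.3, Diaconis–Saloff-Coste). -/
theorem spectral_gap_comparison
    {S : Type*} [Fintype S] [Nonempty S]
    (μ μ' : S → ℝ)
    (hμpos : ∀ σ, 0 < μ σ) (hμsum : ∑ σ, μ σ = 1)
    (hμ'pos : ∀ σ, 0 < μ' σ) (hμ'sum : ∑ σ, μ' σ = 1)
    (K K' : S → S → ℝ)
    (hKnn : ∀ σ σ', 0 ≤ K σ σ') (hK'nn : ∀ σ σ', 0 ≤ K' σ σ')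
    (hstatK : ∀ σ', ∑ σ, μ σ * K σ σ' = μ σ')
    (hstatK' : ∀ σ', ∑ σ, μ' σ * K' σ σ' = μ' σ')
    (E E' V V' : (S → ℝ) → ℝ)
    (hE : ∀ f, E f = (1 / 2) * ∑ σ, ∑ σ', |f σ - f σ'| ^ 2 * K σ σ' * μ σ)
    (hE' : ∀ f, E' f = (1 / 2) * ∑ σ, ∑ σ', |f σ - f σ'| ^ 2 * K' σ σ' * μ' σ)
    (hV : ∀ f, V f = (1 / 2) * ∑ σ, ∑ σ', |f σ - f σ'| ^ 2 * μ σ * μ σ')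
    (hV' : ∀ f, V' f = (1 / 2) * ∑ σ, ∑ σ', |f σ - f σ'| ^ 2 * μ' σ * μ' σ')
    (lam lam' : ℝ)
    (hlam : lam = sInf {r : ℝ | ∃ f : S → ℝ, V f ≠ 0 ∧ r = E f / V f})
    (hlam' : lam' = sInf {r : ℝ | ∃ f : S → ℝ, V' f ≠ 0 ∧ r = E' f / V' f})
    (A a : ℝ) (hA : 0 < A) (ha : 0 < a)
    (hEcomp : ∀ f : S → ℝ, E' f ≤ A * E f)
    (hμcomp : ∀ σ, a * μ σ ≤ μ' σ) :
    lam' ≤ (A / a) * lam := by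
  classical
  have hEnn : ∀ f, 0 ≤ E f := by
    intro f; rw [hE f]
    apply mul_nonneg (by norm_num)
    refine Finset.sum_nonneg fun σ _ => Finset.sum_nonneg fun σ' _ => ?_
    have := hμpos σ; have := hKnn σ σ'; positivity
  have hE'nn : ∀ f, 0 ≤ E' f := by
    intro f; rw [hE' f]
    apply mul_nonneg (by norm_num)
    refine Finset.sum_nonneg fun σ _ => Finset.sum_nonneg fun σ' _ => ?_
    have := hμ'pos σ; have := hK'nn σ σ'; positivity
  have hVnn : ∀ f, 0 ≤ V f := by
    intro f; rw [hV f]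
    apply mul_nonneg (by norm_num)
    refine Finset.sum_nonneg fun σ _ => Finset.sum_nonneg fun σ' _ => ?_
    have := hμpos σ; have := hμpos σ'; positivity
  have hV'nn : ∀ f, 0 ≤ V' f := by
    intro f; rw [hV' f]
    apply mul_nonneg (by norm_num)
    refine Finset.sum_nonneg fun σ _ => Finset.sum_nonneg fun σ' _ => ?_
    have := hμ'pos σ; have := hμ'pos σ'; positivity
  have hVcomp : ∀ f, a * V f ≤ V' f := by
    intro f
    rw [hV f, hV' f, double_sum_var μ hμsum f, double_sum_var μ' hμ'sum f]
    calc a * ∑ σ, (f σ - ∑ τ, f τ * μ τ) ^ 2 * μ σ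
        ≤ a * ∑ σ, (f σ - ∑ τ, f τ * μ' τ) ^ 2 * μ σ :=
          mul_le_mul_of_nonneg_left (var_min μ hμsum f _) ha.le
      _ = ∑ σ, (f σ - ∑ τ, f τ * μ' τ) ^ 2 * (a * μ σ) := by
          rw [Finset.mul_sum]; exact Finset.sum_congr rfl fun σ _ => by ring
      _ ≤ ∑ σ, (f σ - ∑ τ, f τ * μ' τ) ^ 2 * μ' σ :=
          Finset.sum_le_sum fun σ _ =>
            mul_le_mul_of_nonneg_left (hμcomp σ) (sq_nonneg _)
  have hV0 : ∀ f, V f = 0 → V' f = 0 := by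
    intro f h0
    rw [hV f] at h0
    have hsum0 : ∑ σ, ∑ σ', |f σ - f σ'| ^ 2 * μ σ * μ σ' = 0 := by linarith
    have hterm : ∀ σ σ', |f σ - f σ'| ^ 2 * μ σ * μ σ' = 0 := by
      intro σ σ'
      have hnn : ∀ τ τ' : S, 0 ≤ |f τ - f τ'| ^ 2 * μ τ * μ τ' := by
        intro τ τ'; have := hμpos τ; have := hμpos τ'; positivity
      have h1 := (Finset.sum_eq_zero_iff_of_nonneg
        (fun σ _ => Finset.sum_nonneg fun σ' _ => hnn σ σ')).mp hsum0 σ (mem_univ σ)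
      exact (Finset.sum_eq_zero_iff_of_nonneg fun σ' _ => hnn σ σ').mp h1 σ' (mem_univ σ')
    have hfc : ∀ σ σ', f σ = f σ' := by
      intro σ σ'
      have h := hterm σ σ'
      have hne : μ σ * μ σ' ≠ 0 := by
        have := hμpos σ; have := hμpos σ'; positivity
      rw [mul_assoc] at h
      have h2 : |f σ - f σ'| ^ 2 = 0 := (mul_eq_zero.mp h).resolve_right hne
      have h3 : |f σ - f σ'| = 0 := by
        exact pow_eq_zero_iff (two_ne_zero) |>.mp h2
      have := abs_eq_zero.mp h3
      linarith
    rw [hV' f]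
    have hz : ∀ σ σ', |f σ - f σ'| ^ 2 * μ' σ * μ' σ' = 0 := by
      intro σ σ'; rw [hfc σ σ']; simp
    simp only [hz, Finset.sum_const_zero, mul_zero]
  by_cases hex : ∃ f : S → ℝ, V f ≠ 0
  · obtain ⟨f0, hf0⟩ := hex
    have hSne : {r : ℝ | ∃ f, V f ≠ 0 ∧ r = E f / V f}.Nonempty :=
      ⟨E f0 / V f0, f0, hf0, rfl⟩
    have hS'bdd : BddBelow {r : ℝ | ∃ f, V' f ≠ 0 ∧ r = E' f / V' f} := by
      refine ⟨0, ?_⟩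
      rintro r ⟨f, hf, rfl⟩
      exact div_nonneg (hE'nn f) (hV'nn f)
    have key : ∀ f : S → ℝ, V f ≠ 0 → lam' ≤ (A / a) * (E f / V f) := by
      intro f hf
      have hVpos : 0 < V f := (hVnn f).lt_of_ne (Ne.symm hf)
      have hV'pos : 0 < V' f := lt_of_lt_of_le (by positivity) (hVcomp f)
      have h1 : lam' ≤ E' f / V' f := by
        rw [hlam']
        exact csInf_le hS'bdd ⟨f, hV'pos.ne', rfl⟩
      have h2 : E' f / V' f ≤ (A * E f) / (a * V f) :=
        div_le_div₀ (mul_nonneg hA.le (hEnn f)) (hEcomp f) (by positivity) (hVcomp f)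
      have h3 : (A * E f) / (a * V f) = (A / a) * (E f / V f) := by
        field_simp
      linarith [h2, h3 ▸ h2]
    have hlb : a / A * lam' ≤ lam := by
      rw [hlam]
      apply le_csInf hSne
      rintro r ⟨f, hf, rfl⟩
      have hk := key f hf
      have h4 : a / A * lam' ≤ a / A * ((A / a) * (E f / V f)) :=
        mul_le_mul_of_nonneg_left hk (by positivity)
      have h5 : a / A * ((A / a) * (E f / V f)) = E f / V f := by
        field_simp
      linarith
    have h6 : lam' = (A / a) * (a / A * lam') := by field_simp
    calc lam' = (A / a) * (a / A * lam') := h6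
      _ ≤ (A / a) * lam := mul_le_mul_of_nonneg_left hlb (by positivity)
  · push_neg at hex
    have e1 : {r : ℝ | ∃ f, V f ≠ 0 ∧ r = E f / V f} = ∅ := by
      ext r; simp [hex]
    have e2 : {r : ℝ | ∃ f, V' f ≠ 0 ∧ r = E' f / V' f} = ∅ := by
      ext r
      simp only [Set.mem_setOf_eq, Set.mem_empty_iff_false, iff_false, not_exists]
      rintro f ⟨hf, -⟩
      exact hf (hV0 f (hex f))
    rw [hlam, hlam', e1, e2, Real.sInf_empty]
    simp
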